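/- Let α be a continuous ‖·‖₁-dominating normalized gauge norm on L^∞(𝕋). On the closed unit ball 𝔹 = {f ∈ L^∞ : ‖f‖_∞ ≤ 1}, the topology induced by α coincides with the topology induced by ‖·‖₂ (both coincide with convergence in measure). -/

import Mathlib

open MeasureTheory Complex Filter Topology Set ENNReal NNReal

noncomputable section

instance : Fact ((0:ℝ) < 1) := ⟨one_pos⟩

/-- The unit circle, modelled as `ℝ/ℤ`, with normalized Haar (arc-length) measure. -/
abbrev T1 : Type := AddCircle (1 : ℝ)

/-- Normalized Haar measure on the circle. -/
abbrev hm : Measure T1 := volume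

/-- The identity function `z` on the circle, as a complex-valued function. -/
def ztor : T1 → ℂ := fun t => fourier 1 t

/-- A `‖·‖₁`-dominating normalized gauge norm: a norm on `L^∞(𝕋)` with `α(1)=1`,
`α(|f|)=α(f)`, `α(f) ≥ ‖f‖₁`, extended to all measurable functions by
`α(f) = sup{α(s) : s simple, 0 ≤ s ≤ |f|}`.  Values are in `ℝ≥0∞`. -/
structure GaugeNorm where
  toFun : (T1 → ℂ) → ℝ≥0∞
  ae_congr' : ∀ f g : T1 → ℂ, f =ᵐ[hm] g → toFun f = toFun g
  add_le' : ∀ f g : T1 → ℂ, toFun (f + g) ≤ toFun f + toFun g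
  smul' : ∀ (c : ℂ) (f : T1 → ℂ), toFun (c • f) = ‖c‖₊ * toFun f
  norm_one' : toFun 1 = 1
  abs' : ∀ f : T1 → ℂ, toFun (fun x => ((‖f x‖ : ℝ) : ℂ)) = toFun f
  dominating' : ∀ f : T1 → ℂ, MemLp f ⊤ hm → eLpNorm f 1 hm ≤ toFun f
  ext_simple' : ∀ f : T1 → ℂ, AEMeasurable f hm →
    toFun f = ⨆ (s : MeasureTheory.SimpleFunc T1 ℝ)
        (_ : ∀ x, 0 ≤ s x ∧ s x ≤ ‖f x‖),
      toFun (fun x => (s x : ℂ))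

/-- Continuity of a gauge norm: `α(χ_E) → 0` as `m(E) → 0⁺`. -/
def GaugeNorm.IsCont (α : GaugeNorm) : Prop :=
  ∀ ε : ℝ≥0∞, 0 < ε → ∃ δ : ℝ≥0∞, 0 < δ ∧ ∀ E : Set T1, MeasurableSet E →
    hm E < δ → α.toFun (E.indicator 1) < ε

/-- Membership in `L^∞(𝕋)`. -/
def MemLinf (f : T1 → ℂ) : Prop := MemLp f ⊤ hm

/-- Membership in `H^∞`: bounded with vanishing negative Fourier coefficients. -/
def MemHinf (f : T1 → ℂ) : Prop :=
  MemLp f ⊤ hm ∧ ∀ n : ℤ, n < 0 → fourierCoeff f n = 0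

/-- Membership in the Hardy space `H¹`. -/
def MemH1 (f : T1 → ℂ) : Prop :=
  MemLp f 1 hm ∧ ∀ n : ℤ, n < 0 → fourierCoeff f n = 0

/-- Membership in `𝓛^α = {f : α(f) < ∞}`. -/
def GaugeNorm.MemLBig (α : GaugeNorm) (f : T1 → ℂ) : Prop :=
  AEMeasurable f hm ∧ α.toFun f < ⊤

/-- Membership in `L^α`, the `α`-closure of `L^∞` in `𝓛^α`. -/
def GaugeNorm.MemL (α : GaugeNorm) (f : T1 → ℂ) : Prop :=
  α.MemLBig f ∧ ∀ ε : ℝ≥0∞, 0 < ε → ∃ g, MemLinf g ∧ α.toFun (f - g) < ε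

/-- Membership in `H^α`, the `α`-closure of `H^∞`. -/
def GaugeNorm.MemH (α : GaugeNorm) (f : T1 → ℂ) : Prop :=
  α.MemLBig f ∧ ∀ ε : ℝ≥0∞, 0 < ε → ∃ g, MemHinf g ∧ α.toFun (f - g) < ε

/-- `W` is a linear subspace (of functions). -/
def IsSubspace (W : Set (T1 → ℂ)) : Prop :=
  0 ∈ W ∧ (∀ f g, f ∈ W → g ∈ W → f + g ∈ W) ∧ ∀ (c : ℂ) f, f ∈ W → c • f ∈ W

/-- `zW ⊆ W` (up to a.e. equality). -/
def ZInvariant (W : Set (T1 → ℂ)) : Prop :=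
  ∀ f ∈ W, ∃ g ∈ W, g =ᵐ[hm] fun x => ztor x * f x

/-- `W` is `α`-closed (in `L^α`). -/
def GaugeNorm.ClosedSet (α : GaugeNorm) (W : Set (T1 → ℂ)) : Prop :=
  ∀ f, α.MemL f → (∀ ε : ℝ≥0∞, 0 < ε → ∃ g ∈ W, α.toFun (f - g) < ε) →
    ∃ g ∈ W, f =ᵐ[hm] g

/-- `M` is weak*-closed in `L^∞ = (L¹)^*`: every `f ∈ L^∞` all of whose basic
weak* neighborhoods meet `M` is (a.e. equal to an element) in `M`. -/
def IsWeakStarClosed (M : Set (T1 → ℂ)) : Prop :=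
  ∀ f, MemLinf f →
    (∀ ε : ℝ, 0 < ε → ∀ S : Finset (T1 → ℂ), (∀ h ∈ S, Integrable h hm) →
      ∃ g ∈ M, ∀ h ∈ S, ‖∫ x, (g x - f x) * h x ∂hm‖ < ε) →
    ∃ g ∈ M, f =ᵐ[hm] g

/-- The dual norm `α′(f) = sup{∫|fh|dm : h ∈ L^∞, α(h) ≤ 1}`. -/
def GaugeNorm.dual (α : GaugeNorm) (f : T1 → ℂ) : ℝ≥0∞ :=
  ⨆ (h : T1 → ℂ) (_ : MemLinf h ∧ α.toFun h ≤ 1),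
    ∫⁻ x, (‖f x * h x‖₊ : ℝ≥0∞) ∂hm

/-- `W` is saturated under a.e. equality (within `L^α`). -/
def GaugeNorm.AESaturated (α : GaugeNorm) (W : Set (T1 → ℂ)) : Prop :=
  ∀ f g, f ∈ W → g =ᵐ[hm] f → α.MemL g → g ∈ W
instance : IsProbabilityMeasure (hm) := ⟨by simp [AddCircle.measure_univ]⟩

/-- Monotonicity of a gauge norm for pointwise domination. -/
lemma gauge_mono_pt (α : GaugeNorm) {f g : T1 → ℂ} (hf : AEMeasurable f hm)
    (hg : AEMeasurable g hm) (h : ∀ x, ‖f x‖ ≤ ‖g x‖) :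
    α.toFun f ≤ α.toFun g := by
  rw [α.ext_simple' f hf, α.ext_simple' g hg]
  refine iSup_le fun s => iSup_le fun hs => ?_
  exact le_iSup₂_of_le s (fun x => ⟨(hs x).1, (hs x).2.trans (h x)⟩) le_rfl

/-- Monotonicity of a gauge norm for a.e. domination. -/
lemma gauge_mono_ae (α : GaugeNorm) {f g : T1 → ℂ} (hf : AEMeasurable f hm)
    (hg : AEMeasurable g hm) (h : ∀ᵐ x ∂hm, ‖f x‖ ≤ ‖g x‖) :
    α.toFun f ≤ α.toFun g := by
  obtain ⟨f₀, hf₀m, hf₀⟩ := hf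
  obtain ⟨g₀, hg₀m, hg₀⟩ := hg
  have hae : ∀ᵐ x ∂hm, ‖f₀ x‖ ≤ ‖g₀ x‖ := by
    filter_upwards [h, hf₀, hg₀] with x h1 h2 h3
    rw [← h2, ← h3]; exact h1
  set N : Set T1 := {x | ¬ ‖f₀ x‖ ≤ ‖g₀ x‖} with hN
  have hNm : MeasurableSet N := by
    have : N = {x | ‖g₀ x‖ < ‖f₀ x‖} := by
      ext x; simp [hN, not_le]
    rw [this]
    exact measurableSet_lt (hg₀m.norm) (hf₀m.norm)
  have hN0 : hm N = 0 := by
    rw [← MeasureTheory.ae_iff] at *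
    exact hae
  set f' : T1 → ℂ := Nᶜ.indicator f₀ with hf'
  have hf'm : Measurable f' := hf₀m.indicator hNm.compl
  have hf'ae : f' =ᵐ[hm] f₀ := by
    filter_upwards [MeasureTheory.measure_eq_zero_iff_ae_notMem.mp hN0] with x hx
    simp [hf', Set.indicator_of_mem (Set.mem_compl hx)]
  have hpt : ∀ x, ‖f' x‖ ≤ ‖g₀ x‖ := by
    intro x
    by_cases hx : x ∈ N
    · simp [hf', Set.indicator_of_notMem (by simpa using hx : x ∉ Nᶜ)]
    · simp only [hf', Set.indicator_of_mem (Set.mem_compl hx)]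
      exact not_not.mp (by simpa [hN] using hx)
  calc α.toFun f = α.toFun f' := α.ae_congr' _ _ (hf₀.trans hf'ae.symm)
    _ ≤ α.toFun g₀ := gauge_mono_pt α hf'm.aemeasurable hg₀m.aemeasurable hpt
    _ = α.toFun g := (α.ae_congr' _ _ hg₀).symm

/-- on the closed unit ball `𝔹` of `L^∞`, the `α`-topology and the
`‖·‖₂`-topology coincide. -/
theorem stmt9 (α : GaugeNorm) (hc : α.IsCont)
    (f : T1 → ℂ) (F : ℕ → T1 → ℂ)
    (hf : MemLinf f ∧ eLpNorm f ⊤ hm ≤ 1)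
    (hF : ∀ n, MemLinf (F n) ∧ eLpNorm (F n) ⊤ hm ≤ 1) :
    Tendsto (fun n => α.toFun (F n - f)) atTop (𝓝 0) ↔
      Tendsto (fun n => eLpNorm (F n - f) 2 hm) atTop (𝓝 0) := by
  have hmeas : ∀ n, AEStronglyMeasurable (F n - f) hm := fun n =>
    ((hF n).1.aestronglyMeasurable).sub (hf.1.aestronglyMeasurable)
  have hmem : ∀ n, MemLp (F n - f) ⊤ hm := fun n => (hF n).1.sub hf.1
  have htop : ∀ n, eLpNorm (F n - f) ⊤ hm ≤ 2 := fun n => by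
    calc eLpNorm (F n - f) ⊤ hm ≤ eLpNorm (F n) ⊤ hm + eLpNorm f ⊤ hm :=
          eLpNorm_sub_le ((hF n).1.aestronglyMeasurable) (hf.1.aestronglyMeasurable) le_top
      _ ≤ 1 + 1 := add_le_add (hF n).2 hf.2
      _ = 2 := by norm_num
  have hbound : ∀ n, ∀ᵐ x ∂hm, (‖(F n - f) x‖₊ : ℝ≥0∞) ≤ 2 := fun n => by
    filter_upwards [MeasureTheory.ae_le_eLpNormEssSup (f := F n - f) (μ := hm)] with x hx
    exact hx.trans (by rw [← eLpNorm_exponent_top]; exact htop n)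
  constructor
  · -- α → 0 implies L² → 0
    intro hα
    have hL1 : Tendsto (fun n => eLpNorm (F n - f) 1 hm) atTop (𝓝 0) :=
      tendsto_of_tendsto_of_tendsto_of_le_of_le tendsto_const_nhds hα
        (fun n => zero_le) (fun n => α.dominating' _ (hmem n))
    rw [ENNReal.tendsto_atTop_zero]
    intro ε hε
    set ε' := min ε 1 with hε'def
    have hε' : 0 < ε' := lt_min hε one_pos
    have hε'top : ε' ≠ ⊤ := (min_le_right _ _).trans_lt (by norm_num) |>.ne
    have hthr : 0 < ε' ^ 2 / 2 := ENNReal.div_pos (pow_ne_zero _ hε'.ne') (by norm_num)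
    obtain ⟨N, hN⟩ := ENNReal.tendsto_atTop_zero.mp hL1 _ hthr
    refine ⟨N, fun n hn => ?_⟩
    have key : ∫⁻ x, (‖(F n - f) x‖₊ : ℝ≥0∞) ^ (2:ℝ) ∂hm ≤ 2 * eLpNorm (F n - f) 1 hm := by
      rw [eLpNorm_one_eq_lintegral_enorm, ← MeasureTheory.lintegral_const_mul' _ _ (by norm_num)]
      refine lintegral_mono_ae ?_
      filter_upwards [hbound n] with x hx
      calc (‖(F n - f) x‖₊ : ℝ≥0∞) ^ (2:ℝ)
          = (‖(F n - f) x‖₊ : ℝ≥0∞) * (‖(F n - f) x‖₊ : ℝ≥0∞) := by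
            rw [show ((2:ℝ)) = ((2:ℕ):ℝ) by norm_num, ENNReal.rpow_natCast]; ring
        _ ≤ 2 * (‖(F n - f) x‖₊ : ℝ≥0∞) := mul_le_mul_left hx _
    have h2 : eLpNorm (F n - f) 2 hm
        = (∫⁻ x, (‖(F n - f) x‖₊ : ℝ≥0∞) ^ (2:ℝ) ∂hm) ^ (1/2:ℝ) := by
      rw [eLpNorm_eq_lintegral_rpow_enorm_toReal (by norm_num) (by norm_num)]
      norm_num
      rfl
    rw [h2]
    calc (∫⁻ x, (‖(F n - f) x‖₊ : ℝ≥0∞) ^ (2:ℝ) ∂hm) ^ (1/2:ℝ)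
        ≤ (2 * (ε' ^ 2 / 2)) ^ (1/2:ℝ) := by
          refine ENNReal.rpow_le_rpow (key.trans ?_) (by norm_num)
          exact mul_le_mul_right (hN n hn) 2
      _ = (ε' ^ 2) ^ (1/2:ℝ) := by
          rw [ENNReal.mul_div_cancel' (by norm_num) (by norm_num)]
      _ = ε' := by
          rw [show (ε' ^ 2) = ε' ^ ((2:ℕ):ℝ) by rw [ENNReal.rpow_natCast],
            ← ENNReal.rpow_mul]
          norm_num
      _ ≤ ε := min_le_left _ _
  · -- L² → 0 implies α → 0
    intro hL2
    have hL1 : Tendsto (fun n => eLpNorm (F n - f) 1 hm) atTop (𝓝 0) :=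
      tendsto_of_tendsto_of_tendsto_of_le_of_le tendsto_const_nhds hL2
        (fun n => zero_le)
        (fun n => eLpNorm_le_eLpNorm_of_exponent_le (by norm_num) (hmeas n))
    rw [ENNReal.tendsto_atTop_zero]
    intro ε hε
    set ε' := min ε 1 with hε'def
    have hε' : 0 < ε' := lt_min hε one_pos
    have hε'top : ε' ≠ ⊤ := ((min_le_right _ _).trans_lt (by norm_num)).ne
    have h3 : (0:ℝ≥0∞) < ε' / 3 := ENNReal.div_pos hε'.ne' (by norm_num)
    have h3top : ε' / 3 ≠ ⊤ := (ENNReal.div_lt_top hε'top (by norm_num)).ne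
    obtain ⟨δ, hδ, hδε⟩ := hc (ε' / 3) h3
    set t : ℝ := (ε' / 3).toReal with htdef
    have ht0 : 0 < t := ENNReal.toReal_pos h3.ne' h3top
    have htofReal : ENNReal.ofReal t = ε' / 3 := ENNReal.ofReal_toReal h3top
    set δ' : ℝ≥0∞ := min δ 1 / 2 with hδ'def
    have hδ'δ : δ' < δ := lt_of_lt_of_le (ENNReal.half_lt_self
      (lt_min hδ one_pos).ne' (by simp)) (min_le_left _ _)
    have hthr : 0 < ENNReal.ofReal t * δ' := by
      refine ENNReal.mul_pos ?_ ?_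
      · simpa [htofReal] using h3.ne'
      · simp only [hδ'def]
        exact (ENNReal.div_pos (lt_min hδ one_pos).ne' (by norm_num)).ne'
    obtain ⟨N, hN⟩ := ENNReal.tendsto_atTop_zero.mp hL1 _ hthr
    refine ⟨N, fun n hn => ?_⟩
    -- measurable representative
    obtain ⟨g₀, hg₀m, heq⟩ := (hmeas n).aemeasurable
    set E : Set T1 := {x | t ≤ ‖g₀ x‖} with hEdef
    have hE : MeasurableSet E := measurableSet_le measurable_const hg₀m.norm
    -- Chebyshev
    have hcheb : hm E < δ := by
      have hE' : E = {x | ENNReal.ofReal t ≤ (‖g₀ x‖₊ : ℝ≥0∞)} := by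
        ext x
        simp only [hEdef, Set.mem_setOf_eq, ← enorm_eq_nnnorm, ← ofReal_norm_eq_enorm]
        exact (ENNReal.ofReal_le_ofReal_iff (norm_nonneg _)).symm
      have hch : hm E ≤ (∫⁻ x, (‖g₀ x‖₊ : ℝ≥0∞) ∂hm) / ENNReal.ofReal t := by
        rw [hE']
        exact meas_ge_le_lintegral_div hg₀m.enorm.aemeasurable
          (by simpa [htofReal] using h3.ne') ENNReal.ofReal_ne_top
      have hlint : ∫⁻ x, (‖g₀ x‖₊ : ℝ≥0∞) ∂hm = eLpNorm (F n - f) 1 hm := by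
        rw [eLpNorm_one_eq_lintegral_enorm]
        refine lintegral_congr_ae ?_
        filter_upwards [heq] with x hx
        rw [hx, enorm_eq_nnnorm]
      refine lt_of_le_of_lt (hch.trans ?_) hδ'δ
      rw [hlint]
      calc eLpNorm (F n - f) 1 hm / ENNReal.ofReal t
          ≤ ENNReal.ofReal t * δ' / ENNReal.ofReal t :=
            ENNReal.div_le_div_right (hN n hn) _
        _ = δ' := by
            rw [mul_comm, mul_div_assoc,
              ENNReal.div_self (by simpa [htofReal] using h3.ne') ENNReal.ofReal_ne_top,
              mul_one]
    have hχ : α.toFun (E.indicator 1) < ε' / 3 := hδε E hE hcheb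
    -- a.e. bound on g₀
    have hb₀ : ∀ᵐ x ∂hm, ‖g₀ x‖ ≤ 2 := by
      filter_upwards [hbound n, heq] with x hx hx2
      rw [← hx2]
      have : (‖(F n - f) x‖₊ : ℝ≥0∞) ≤ ((2:ℝ≥0) : ℝ≥0∞) := by simpa using hx
      simpa [← NNReal.coe_le_coe, coe_nnnorm] using ENNReal.coe_le_coe.mp this
    -- decompose
    have hsplit : g₀ = E.indicator g₀ + Eᶜ.indicator g₀ := (Set.indicator_self_add_compl E g₀).symm
    have hstep : α.toFun (F n - f) ≤ α.toFun (E.indicator g₀) + α.toFun (Eᶜ.indicator g₀) := by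
      rw [α.ae_congr' _ _ heq]
      calc α.toFun g₀ = α.toFun (E.indicator g₀ + Eᶜ.indicator g₀) := by rw [← hsplit]
        _ ≤ _ := α.add_le' _ _
    -- bound the E part
    have hpart1 : α.toFun (E.indicator g₀) ≤ 2 * α.toFun (E.indicator 1) := by
      have hmono : α.toFun (E.indicator g₀) ≤ α.toFun ((2:ℂ) • E.indicator 1) := by
        refine gauge_mono_ae α (hg₀m.indicator hE).aemeasurable
          ((measurable_one.indicator hE).const_smul (2:ℂ)).aemeasurable ?_
        filter_upwards [hb₀] with x hx
        by_cases hxE : x ∈ E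
        · simp only [Set.indicator_of_mem hxE, Pi.smul_apply, Pi.one_apply, smul_eq_mul, mul_one]
          simpa using hx
        · simp [Set.indicator_of_notMem hxE]
      calc α.toFun (E.indicator g₀) ≤ α.toFun ((2:ℂ) • E.indicator 1) := hmono
        _ = (‖(2:ℂ)‖₊ : ℝ≥0∞) * α.toFun (E.indicator 1) := α.smul' 2 _
        _ = 2 * α.toFun (E.indicator 1) := by norm_num
    -- bound the Eᶜ part
    have hpart2 : α.toFun (Eᶜ.indicator g₀) ≤ ε' / 3 := by
      have hmono : α.toFun (Eᶜ.indicator g₀) ≤ α.toFun ((t:ℂ) • (1 : T1 → ℂ)) := by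
        refine gauge_mono_pt α (hg₀m.indicator hE.compl).aemeasurable
          (measurable_one.const_smul (t:ℂ)).aemeasurable ?_
        intro x
        have habs : ‖((t:ℂ) • (1 : T1 → ℂ)) x‖ = t := by
          simp [Pi.smul_apply, Complex.norm_real, abs_of_pos ht0]
        rw [habs]
        by_cases hxE : x ∈ Eᶜ
        · rw [Set.indicator_of_mem hxE]
          have : ¬ t ≤ ‖g₀ x‖ := by simpa [hEdef] using hxE
          simpa using (not_le.mp this).le
        · simp [Set.indicator_of_notMem hxE, ht0.le]
      calc α.toFun (Eᶜ.indicator g₀) ≤ α.toFun ((t:ℂ) • (1 : T1 → ℂ)) := hmono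
        _ = (‖(t:ℂ)‖₊ : ℝ≥0∞) * α.toFun 1 := α.smul' _ _
        _ = ε' / 3 := by
            rw [α.norm_one', mul_one, ← enorm_eq_nnnorm, ← ofReal_norm_eq_enorm]
            rw [Complex.norm_real, Real.norm_eq_abs, abs_of_pos ht0, htofReal]
    calc α.toFun (F n - f) ≤ α.toFun (E.indicator g₀) + α.toFun (Eᶜ.indicator g₀) := hstep
      _ ≤ 2 * α.toFun (E.indicator 1) + ε' / 3 := add_le_add hpart1 hpart2
      _ ≤ 2 * (ε' / 3) + ε' / 3 := add_le_add_left (mul_le_mul_right hχ.le _) _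
      _ = 3 * (ε' / 3) := by ring
      _ = ε' := by
          rw [mul_comm, ENNReal.div_mul_cancel (by norm_num) (by norm_num)]
      _ ≤ ε := min_le_left _ _
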